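/- Let X be a real random variable with continuous cdf, E X² < ∞, Y square-integrable, E[X²Y²] < ∞, and ℓ(u) = E[(Y - α_u - β_u X)² | X ≥ u] where (α_u, β_u) are the best linear prediction coefficients given X ≥ u. Then ℓ is continuous on {u : P(X ≥ u) > 0 and Var(X | X ≥ u) > 0}. -/

import Mathlib

open MeasureTheory ProbabilityTheory Filter Topology

/-- Conditional mean of `W` given the event `{X ≥ u}`. -/
noncomputable def condMean {Ω : Type*} [MeasurableSpace Ω] (μ : Measure Ω)
    (X : Ω → ℝ) (u : ℝ) (W : Ω → ℝ) : ℝ :=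
  (∫ ω in {ω | u ≤ X ω}, W ω ∂μ) / (μ {ω | u ≤ X ω}).toReal

/-- Best linear slope given `X ≥ u`: `Cov(X,Y | X ≥ u)/Var(X | X ≥ u)`. -/
noncomputable def slopeCoef {Ω : Type*} [MeasurableSpace Ω] (μ : Measure Ω)
    (X Y : Ω → ℝ) (u : ℝ) : ℝ :=
  (condMean μ X u (fun ω => X ω * Y ω) - condMean μ X u X * condMean μ X u Y) /
    (condMean μ X u (fun ω => (X ω) ^ 2) - (condMean μ X u X) ^ 2)

/-- Best linear intercept given `X ≥ u`. -/
noncomputable def interCoef {Ω : Type*} [MeasurableSpace Ω] (μ : Measure Ω)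
    (X Y : Ω → ℝ) (u : ℝ) : ℝ :=
  condMean μ X u Y - slopeCoef μ X Y u * condMean μ X u X

/-- `ℓ(u) = E[(Y - α_u - β_u X)² | X ≥ u]` with the best linear coefficients. -/
noncomputable def lossFun {Ω : Type*} [MeasurableSpace Ω] (μ : Measure Ω)
    (X Y : Ω → ℝ) (u : ℝ) : ℝ :=
  condMean μ X u (fun ω => (Y ω - interCoef μ X Y u - slopeCoef μ X Y u * X ω) ^ 2)

lemma contIntegral {Ω : Type*} [MeasurableSpace Ω] (μ : Measure Ω) [IsProbabilityMeasure μ]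
    (X : Ω → ℝ) (hX : Measurable X) (hcdf : ∀ x : ℝ, μ {ω | X ω = x} = 0) (W : Ω → ℝ)
    (hW : Integrable W μ) :
    Continuous (fun u => ∫ ω in {ω | u ≤ X ω}, W ω ∂μ) := by
  rw [continuous_iff_continuousAt]
  intro u
  rw [ContinuousAt, tendsto_iff_seq_tendsto]
  intro v hv
  have hset : ∀ t : ℝ, MeasurableSet {ω | t ≤ X ω} := fun t =>
    hX measurableSet_Ici
  have hrw : ∀ t : ℝ, ∫ ω in {ω | t ≤ X ω}, W ω ∂μ
      = ∫ ω, Set.indicator {ω | t ≤ X ω} W ω ∂μ := fun t =>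
    (integral_indicator (hset t)).symm
  simp only [Function.comp, hrw]
  apply tendsto_integral_of_dominated_convergence (fun ω => |W ω|)
  · exact fun n => (hW.aestronglyMeasurable.indicator (hset (v n)))
  · exact hW.abs
  · intro n
    filter_upwards with ω
    rw [Real.norm_eq_abs]
    classical
    by_cases h : ω ∈ {ω | v n ≤ X ω}
    · rw [Set.indicator_of_mem h]
    · rw [Set.indicator_of_notMem h]; simp [abs_nonneg]
  · have hne : ∀ᵐ ω ∂μ, X ω ≠ u := by
      have := hcdf u
      rw [ae_iff]
      simpa using this
    filter_upwards [hne] with ω hω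
    rcases lt_or_gt_of_ne hω with hlt | hgt
    · have hmem : ω ∉ {ω' | u ≤ X ω'} := by simpa using hlt
      rw [Set.indicator_of_notMem hmem W]
      have hev : ∀ᶠ n in atTop, X ω < v n := hv.eventually (eventually_gt_nhds hlt)
      have h : (fun _ : ℕ => (0:ℝ)) =ᶠ[atTop]
          fun n => Set.indicator {ω' | v n ≤ X ω'} W ω := by
        filter_upwards [hev] with n hn
        have hm : ω ∉ {ω' | v n ≤ X ω'} := by simpa using hn
        exact (Set.indicator_of_notMem hm W).symm
      exact Tendsto.congr' h tendsto_const_nhds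
    · have hmem : ω ∈ {ω' | u ≤ X ω'} := le_of_lt hgt
      rw [Set.indicator_of_mem hmem W]
      have hev : ∀ᶠ n in atTop, v n < X ω := hv.eventually (eventually_lt_nhds hgt)
      have h : (fun _ : ℕ => W ω) =ᶠ[atTop]
          fun n => Set.indicator {ω' | v n ≤ X ω'} W ω := by
        filter_upwards [hev] with n hn
        have hm : ω ∈ {ω' | v n ≤ X ω'} := hn.le
        exact (Set.indicator_of_mem hm W).symm
      exact Tendsto.congr' h tendsto_const_nhds

lemma contDenom {Ω : Type*} [MeasurableSpace Ω] (μ : Measure Ω) [IsProbabilityMeasure μ]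
    (X : Ω → ℝ) (hX : Measurable X) (hcdf : ∀ x : ℝ, μ {ω | X ω = x} = 0) :
    Continuous (fun u => (μ {ω | u ≤ X ω}).toReal) := by
  have := contIntegral μ X hX hcdf (fun _ => (1:ℝ)) (integrable_const 1)
  convert this using 2 with u
  rw [setIntegral_const]
  simp
  rfl

lemma condMean_contAt {Ω : Type*} [MeasurableSpace Ω] (μ : Measure Ω) [IsProbabilityMeasure μ]
    (X : Ω → ℝ) (hX : Measurable X) (hcdf : ∀ x : ℝ, μ {ω | X ω = x} = 0)
    (W : Ω → ℝ) (hW : Integrable W μ) {u : ℝ} (hu : 0 < μ {ω | u ≤ X ω}) :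
    ContinuousAt (fun u => condMean μ X u W) u := by
  have hne : (μ {ω | u ≤ X ω}).toReal ≠ 0 :=
    (ENNReal.toReal_pos hu.ne' (measure_ne_top μ _)).ne'
  simp only [condMean]
  exact ((contIntegral μ X hX hcdf W hW).continuousAt).div
    ((contDenom μ X hX hcdf).continuousAt) hne

lemma condMean_expand {Ω : Type*} [MeasurableSpace Ω] (μ : Measure Ω) [IsFiniteMeasure μ]
    (X Y : Ω → ℝ) (u : ℝ)
    (hT : (μ {ω | u ≤ X ω}).toReal ≠ 0)
    (hiX : Integrable X μ) (hiY : Integrable Y μ)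
    (hiXY : Integrable (fun ω => X ω * Y ω) μ)
    (hiX2 : Integrable (fun ω => (X ω) ^ 2) μ)
    (hiY2 : Integrable (fun ω => (Y ω) ^ 2) μ) (a b : ℝ) :
    condMean μ X u (fun ω => (Y ω - a - b * X ω) ^ 2)
      = condMean μ X u (fun ω => (Y ω) ^ 2) - 2 * a * condMean μ X u Y
        - 2 * b * condMean μ X u (fun ω => X ω * Y ω) + a ^ 2
        + 2 * a * b * condMean μ X u X
        + b ^ 2 * condMean μ X u (fun ω => (X ω) ^ 2) := by
  set S := {ω | u ≤ X ω} with hSdef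
  set ν := μ.restrict S with hνdef
  have jY2 : Integrable (fun ω => (Y ω) ^ 2) ν := hiY2.restrict
  have jY : Integrable Y ν := hiY.restrict
  have jXY : Integrable (fun ω => X ω * Y ω) ν := hiXY.restrict
  have jX : Integrable X ν := hiX.restrict
  have jX2 : Integrable (fun ω => (X ω) ^ 2) ν := hiX2.restrict
  have p1 : Integrable (fun ω => (Y ω) ^ 2 - (2 * a) * Y ω) ν := jY2.sub (jY.const_mul _)
  have p2 : Integrable (fun ω => (Y ω) ^ 2 - (2 * a) * Y ω - (2 * b) * (X ω * Y ω)) ν :=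
    p1.sub (jXY.const_mul _)
  have p3 : Integrable
      (fun ω => (Y ω) ^ 2 - (2 * a) * Y ω - (2 * b) * (X ω * Y ω) + a ^ 2) ν :=
    p2.add (integrable_const _)
  have p4 : Integrable (fun ω =>
      (Y ω) ^ 2 - (2 * a) * Y ω - (2 * b) * (X ω * Y ω) + a ^ 2 + (2 * a * b) * X ω) ν :=
    p3.add (jX.const_mul _)
  have hnum : ∫ ω in S, (Y ω - a - b * X ω) ^ 2 ∂μ
      = (∫ ω in S, (Y ω) ^ 2 ∂μ) - 2 * a * (∫ ω in S, Y ω ∂μ)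
        - 2 * b * (∫ ω in S, X ω * Y ω ∂μ) + (μ S).toReal * a ^ 2
        + 2 * a * b * (∫ ω in S, X ω ∂μ) + b ^ 2 * (∫ ω in S, (X ω) ^ 2 ∂μ) := by
    have hfe : ∀ ω, (Y ω - a - b * X ω) ^ 2
        = (Y ω) ^ 2 - (2 * a) * Y ω - (2 * b) * (X ω * Y ω) + a ^ 2
          + (2 * a * b) * X ω + (b ^ 2) * (X ω) ^ 2 := fun ω => by ring
    rw [integral_congr_ae (Eventually.of_forall hfe)]
    rw [integral_add p4 (jX2.const_mul _), integral_add p3 (jX.const_mul _),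
      integral_add p2 (integrable_const _), integral_sub p1 (jXY.const_mul _),
      integral_sub jY2 (jY.const_mul _), integral_const_mul, integral_const_mul,
      integral_const_mul, integral_const_mul, integral_const]
    simp only [hνdef, Measure.real, Measure.restrict_apply_univ, smul_eq_mul]
  simp only [condMean, ← hSdef]
  rw [hnum]
  field_simp

theorem stmt7 {Ω : Type*} [MeasurableSpace Ω] (μ : Measure Ω) [IsProbabilityMeasure μ]
    (X Y : Ω → ℝ) (hX : Measurable X) (hY : Measurable Y)
    (hcdf : ∀ x : ℝ, μ {ω | X ω = x} = 0)
    (hX2 : Integrable (fun ω => (X ω) ^ 2) μ)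
    (hY2 : Integrable (fun ω => (Y ω) ^ 2) μ)
    (hXY2 : Integrable (fun ω => (X ω) ^ 2 * (Y ω) ^ 2) μ) :
    ContinuousOn (fun u => lossFun μ X Y u)
      {u : ℝ | 0 < μ {ω | u ≤ X ω} ∧
        0 < condMean μ X u (fun ω => (X ω) ^ 2) - (condMean μ X u X) ^ 2} := by
  have hXint : Integrable X μ := by
    refine (hX2.add (integrable_const 1)).mono' hX.aestronglyMeasurable ?_
    filter_upwards with ω
    rw [Real.norm_eq_abs]
    simp only [Pi.add_apply]
    nlinarith [sq_nonneg (|X ω| - 1), sq_abs (X ω), abs_nonneg (X ω)]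
  have hYint : Integrable Y μ := by
    refine (hY2.add (integrable_const 1)).mono' hY.aestronglyMeasurable ?_
    filter_upwards with ω
    rw [Real.norm_eq_abs]
    simp only [Pi.add_apply]
    nlinarith [sq_nonneg (|Y ω| - 1), sq_abs (Y ω), abs_nonneg (Y ω)]
  have hXYint : Integrable (fun ω => X ω * Y ω) μ := by
    refine (hX2.add hY2).mono' (hX.mul hY).aestronglyMeasurable ?_
    filter_upwards with ω
    rw [Real.norm_eq_abs, abs_mul]
    simp only [Pi.add_apply]
    nlinarith [sq_nonneg (|X ω| - |Y ω|), sq_abs (X ω), sq_abs (Y ω),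
      abs_nonneg (X ω), abs_nonneg (Y ω)]
  have hg : ContinuousOn (fun u => condMean μ X u (fun ω => (Y ω) ^ 2)
        - 2 * interCoef μ X Y u * condMean μ X u Y
        - 2 * slopeCoef μ X Y u * condMean μ X u (fun ω => X ω * Y ω)
        + (interCoef μ X Y u) ^ 2
        + 2 * interCoef μ X Y u * slopeCoef μ X Y u * condMean μ X u X
        + (slopeCoef μ X Y u) ^ 2 * condMean μ X u (fun ω => (X ω) ^ 2))
      {u : ℝ | 0 < μ {ω | u ≤ X ω} ∧
        0 < condMean μ X u (fun ω => (X ω) ^ 2) - (condMean μ X u X) ^ 2} := by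
    intro u hu
    obtain ⟨h1, h2⟩ := hu
    apply ContinuousAt.continuousWithinAt
    have cY2 := condMean_contAt μ X hX hcdf _ hY2 h1
    have cY := condMean_contAt μ X hX hcdf Y hYint h1
    have cXY := condMean_contAt μ X hX hcdf _ hXYint h1
    have cX := condMean_contAt μ X hX hcdf X hXint h1
    have cX2 := condMean_contAt μ X hX hcdf _ hX2 h1
    have cβ : ContinuousAt (fun u => slopeCoef μ X Y u) u := by
      unfold slopeCoef
      exact (cXY.sub (cX.mul cY)).div (cX2.sub (cX.pow 2)) h2.ne'
    have cα : ContinuousAt (fun u => interCoef μ X Y u) u := by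
      unfold interCoef
      exact cY.sub (cβ.mul cX)
    exact ((((cY2.sub ((continuousAt_const.mul cα).mul cY)).sub
      ((continuousAt_const.mul cβ).mul cXY)).add (cα.pow 2)).add
      (((continuousAt_const.mul cα).mul cβ).mul cX)).add ((cβ.pow 2).mul cX2)
  refine hg.congr ?_
  intro u hu
  have hT : (μ {ω | u ≤ X ω}).toReal ≠ 0 :=
    (ENNReal.toReal_pos hu.1.ne' (measure_ne_top μ _)).ne'
  simp only [lossFun]
  exact condMean_expand μ X Y u hT hXint hYint hXYint hX2 hY2 _ _
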